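/- Let M ∈ ℝ^{n×n} be symmetric positive definite, μ(q) an m×n matrix for each q, and define at each point the M⁻¹-orthogonal projectors as in the geometric nonholonomic integrator. For the discrete Lagrangian L_d(q₀,q₁) = (1/2h)(q₁−q₀)ᵀM(q₁−q₀) − (h/2)(V(q₀)+V(q₁)), the discrete nonholonomic equations (projected equation with multiplier and the average-constraint equation) are equivalent to the system: q_{k+1} − 2q_k + q_{k−1} = −h² M⁻¹(∇V(q_k) + μ(q_k)ᵀ λ̃_k) for some λ̃_k ∈ ℝᵐ, together with μ(q_k) (q_{k+1} − q_{k−1})/(2h) = 0. -/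

import Mathlib

open Matrix

/-- For the symmetric discretization
`L_d(q₀,q₁) = (1/2h)(q₁-q₀)ᵀM(q₁-q₀) - (h/2)(V(q₀)+V(q₁))` of a mechanical
Lagrangian with constraints `μ(q) q̇ = 0`, the discrete nonholonomic equations
(the pre-momentum is `p⁻ = -D₁L_d(q_k,q_{k+1}) = M(q_{k+1}-q_k)/h + (h/2)∇V(q_k)`
and the post-momentum is `p⁺ = D₂L_d(q_{k-1},q_k) = M(q_k-q_{k-1})/h - (h/2)∇V(q_k)`;
the equations are `D₁L_d(q_k,q_{k+1}) + D₂L_d(q_{k-1},q_k) = μ(q_k)ᵀ λ_k` together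
with `μ(q_k) M⁻¹ (p⁻ + p⁺)/2 = 0`) are equivalent to the system
`q_{k+1} - 2q_k + q_{k-1} = -h² M⁻¹(∇V(q_k) + μ(q_k)ᵀ λ̃_k)` for some `λ̃_k`,
together with `μ(q_k) (q_{k+1} - q_{k-1})/(2h) = 0`. -/
theorem discrete_nonholonomic_equations_iff_verlet_form
    {n m : ℕ} (M : Matrix (Fin n) (Fin n) ℝ) (hM : M.PosDef)
    (μ : (Fin n → ℝ) → Matrix (Fin m) (Fin n) ℝ)
    (V : (Fin n → ℝ) → ℝ) (gradV : (Fin n → ℝ) → (Fin n → ℝ))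
    (hV : Differentiable ℝ V)
    (hgrad : ∀ q u : Fin n → ℝ, fderiv ℝ V q u = gradV q ⬝ᵥ u)
    (h : ℝ) (hh : 0 < h)
    (qprev qk qnext : Fin n → ℝ) :
    ((∃ l : Fin m → ℝ,
        ((1/h) • M.mulVec (qk - qprev) - (h/2) • gradV qk)
          - ((1/h) • M.mulVec (qnext - qk) + (h/2) • gradV qk)
        = (μ qk).transpose.mulVec l) ∧
      (μ qk).mulVec (M⁻¹.mulVec ((1/2 : ℝ) •
        (((1/h) • M.mulVec (qnext - qk) + (h/2) • gradV qk)
          + ((1/h) • M.mulVec (qk - qprev) - (h/2) • gradV qk)))) = 0)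
    ↔ ((∃ l : Fin m → ℝ,
          qnext - (2 : ℝ) • qk + qprev
            = -(h^2) • M⁻¹.mulVec (gradV qk + (μ qk).transpose.mulVec l)) ∧
        (μ qk).mulVec ((1/(2*h)) • (qnext - qprev)) = 0) := by
  have hdet : IsUnit M.det := isUnit_iff_ne_zero.mpr (ne_of_gt hM.det_pos)
  have hinv : M⁻¹ * M = 1 := Matrix.nonsing_inv_mul M hdet
  have hinv' : M * M⁻¹ = 1 := Matrix.mul_nonsing_inv M hdet
  have hne : h ≠ 0 := ne_of_gt hh
  -- the second equations are literally equal
  have h2 : M⁻¹.mulVec ((1/2 : ℝ) •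
        (((1/h) • M.mulVec (qnext - qk) + (h/2) • gradV qk)
          + ((1/h) • M.mulVec (qk - qprev) - (h/2) • gradV qk)))
      = (1/(2*h)) • (qnext - qprev) := by
    have e : ((1/2 : ℝ) •
        (((1/h) • M.mulVec (qnext - qk) + (h/2) • gradV qk)
          + ((1/h) • M.mulVec (qk - qprev) - (h/2) • gradV qk)))
        = M.mulVec ((1/(2*h)) • (qnext - qprev)) := by
      simp only [Matrix.mulVec_add, Matrix.mulVec_sub, Matrix.mulVec_smul, smul_add, smul_sub]
      match_scalars <;> field_simp <;> ring
    rw [e, Matrix.mulVec_mulVec, hinv, Matrix.one_mulVec]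
  rw [h2]
  constructor
  · rintro ⟨⟨l, hl⟩, h2'⟩
    refine ⟨⟨(1/h) • l, ?_⟩, h2'⟩
    have hμ : (μ qk).transpose.mulVec l
        = ((1/h) • M.mulVec (qk - qprev) - (h/2) • gradV qk)
          - ((1/h) • M.mulVec (qnext - qk) + (h/2) • gradV qk) := hl.symm
    rw [Matrix.mulVec_smul, hμ]
    simp only [Matrix.mulVec_add, Matrix.mulVec_sub, Matrix.mulVec_smul,
      Matrix.mulVec_mulVec, hinv, Matrix.one_mulVec, smul_add, smul_sub]
    match_scalars <;> field_simp <;> ring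
  · rintro ⟨⟨l, hl⟩, h2'⟩
    refine ⟨⟨h • l, ?_⟩, h2'⟩
    have key := congrArg M.mulVec hl
    rw [Matrix.mulVec_smul, Matrix.mulVec_mulVec, hinv', Matrix.one_mulVec] at key
    have hμ : (μ qk).transpose.mulVec l
        = (-(1/h^2)) • M.mulVec (qnext - (2:ℝ) • qk + qprev) - gradV qk := by
      rw [key]
      match_scalars <;> field_simp <;> ring
    rw [Matrix.mulVec_smul, hμ]
    simp only [Matrix.mulVec_add, Matrix.mulVec_sub, Matrix.mulVec_smul, smul_add, smul_sub]
    match_scalars <;> field_simp <;> ring
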